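/- Let X be a finite topological T₀-space, let D(X) be its set of down beat points, and let S_F(X) denote the number of distinct semiflows on X. Then S_F(X) ≥ 2^{|D(X)|}. -/

import Mathlib

open NNReal

/-- A semiflow on a topological space `X`: a jointly continuous map
`φ : ℝ≥0 × X → X` with `φ 0 x = x` and `φ s (φ t x) = φ (s + t) x`. -/
def IsSemiflow {X : Type*} [TopologicalSpace X] (φ : ℝ≥0 → X → X) : Prop :=
  Continuous (fun p : ℝ≥0 × X => φ p.1 p.2) ∧
  (∀ x : X, φ 0 x = x) ∧
  ∀ (s t : ℝ≥0) (x : X), φ s (φ t x) = φ (s + t) x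

/-- A semiflow is trivial if every time-`t` map is the identity. -/
def IsTrivialSemiflow {X : Type*} [TopologicalSpace X] (φ : ℝ≥0 → X → X) : Prop :=
  ∀ (t : ℝ≥0) (x : X), φ t x = x

/-- `x` is a down beat point: `U_x \ {x}` has a greatest element in the
specialization order (`y ⤳ x` means `y ≤ x`, i.e. `y ∈ U_x`). -/
def IsDownBeatPoint {X : Type*} [TopologicalSpace X] (x : X) : Prop :=
  ∃ m : X, (m ⤳ x ∧ m ≠ x) ∧ ∀ y : X, y ⤳ x → y ≠ x → y ⤳ m

/-- `x` is an up beat point: `F_x \ {x}` has a least element in the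
specialization order. -/
def IsUpBeatPoint {X : Type*} [TopologicalSpace X] (x : X) : Prop :=
  ∃ m : X, (x ⤳ m ∧ m ≠ x) ∧ ∀ y : X, x ⤳ y → y ≠ x → m ⤳ y

/-! ### Auxiliary: iterates of specializing maps -/

section IterAux
variable {X : Type*} [TopologicalSpace X]

lemma iter_specializes' {f : X → X} (hf : ∀ x, f x ⤳ x) (n : ℕ) (x : X) :
    f^[n] x ⤳ x := by
  induction n with
  | zero => exact specializes_refl x
  | succ n ih =>
    rw [Function.iterate_succ_apply']
    exact (hf _).trans ih

lemma iter_stab [Finite X] [T0Space X] {f : X → X} (hf : ∀ x, f x ⤳ x) (x : X) :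
    f (f^[Nat.card X] x) = f^[Nat.card X] x := by
  set n := Nat.card X with hn
  have key : ∃ k ≤ n, f (f^[k] x) = f^[k] x := by
    by_contra hcon
    push_neg at hcon
    have hne : ∀ k ≤ n, f^[k+1] x ≠ f^[k] x := by
      intro k hk
      rw [Function.iterate_succ_apply']
      exact hcon k hk
    have hinj : Function.Injective (fun i : Fin (n+1) => f^[i] x) := by
      have hstrict : ∀ i j : ℕ, i < j → j ≤ n → f^[j] x ≠ f^[i] x := by
        intro i j hij hj h
        have h1 : f^[j] x ⤳ f^[i+1] x := by
          have he : f^[j] x = f^[j - (i+1)] (f^[i+1] x) := by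
            rw [← Function.iterate_add_apply]
            congr 1
            omega
          rw [he]
          exact iter_specializes' hf _ _
        have h2 : f^[i+1] x ⤳ f^[i] x := by
          rw [Function.iterate_succ_apply']
          exact hf _
        have h3 : f^[i] x ⤳ f^[i+1] x := h ▸ h1
        exact hne i (by omega) ((h2.antisymm h3).eq)
      intro i j hij
      simp only at hij
      rcases lt_trichotomy (i : ℕ) (j : ℕ) with h | h | h
      · exact absurd hij.symm (hstrict i j h (by omega))
      · exact Fin.ext h
      · exact absurd hij (hstrict j i h (by omega))
    have := Nat.card_le_card_of_injective _ hinj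
    simp [← hn] at this
  obtain ⟨k, hk, hfix⟩ := key
  have heq : f^[n] x = f^[k] x := by
    have h1 : f^[n - k] (f^[k] x) = f^[k] x := Function.iterate_fixed hfix _
    rw [← Function.iterate_add_apply] at h1
    rwa [Nat.sub_add_cancel hk] at h1
  rw [heq, hfix]

end IterAux

/-! ### Finiteness of the set of semiflows -/

section SemiflowFinite
variable {X : Type*} [TopologicalSpace X] [Finite X] [T0Space X] {φ : ℝ≥0 → X → X}

lemma semiflow_cont_t (hφ : IsSemiflow φ) (s : ℝ≥0) : Continuous (φ s) :=
  hφ.1.comp (continuous_const.prodMk continuous_id)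

lemma semiflow_iterate (hφ : IsSemiflow φ) (u : ℝ≥0) (n : ℕ) (x : X) :
    φ (n * u) x = (φ u)^[n] x := by
  induction n with
  | zero => simpa using hφ.2.1 x
  | succ n ih =>
    have h : ((n + 1 : ℕ) : ℝ≥0) * u = u + n * u := by push_cast; ring
    rw [h, ← hφ.2.2, Function.iterate_succ_apply', ih]

lemma semiflow_small (hφ : IsSemiflow φ) (x : X) :
    ∃ ε : ℝ, 0 < ε ∧ ∀ t : ℝ≥0, (t : ℝ) < ε → φ t x ⤳ x := by
  have hopen : IsOpen ((fun p : ℝ≥0 × X => φ p.1 p.2) ⁻¹' nhdsKer {x}) :=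
    isOpen_nhdsKer.preimage hφ.1
  have hmem : ((0 : ℝ≥0), x) ∈ (fun p : ℝ≥0 × X => φ p.1 p.2) ⁻¹' nhdsKer {x} := by
    simp only [Set.mem_preimage, hφ.2.1 x]
    exact mem_nhdsKer_singleton.2 (specializes_refl x)
  rw [isOpen_prod_iff] at hopen
  obtain ⟨u, v, hu, hv, h0u, hxv, huv⟩ := hopen 0 x hmem
  obtain ⟨ε, hε, hball⟩ := Metric.isOpen_iff.1 hu 0 h0u
  refine ⟨ε, hε, fun t ht => ?_⟩
  have htu : t ∈ u := by
    apply hball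
    simp only [Metric.mem_ball, NNReal.dist_eq]
    simpa using ht
  exact mem_nhdsKer_singleton.1 (huv (Set.mk_mem_prod htu hxv))

lemma semiflow_deflate (hφ : IsSemiflow φ) (t : ℝ≥0) (x : X) : φ t x ⤳ x := by
  classical
  haveI : Nonempty X := ⟨x⟩
  haveI : Fintype X := Fintype.ofFinite X
  choose ε hε hspec using semiflow_small hφ
  obtain ⟨δ, hδ, hδs⟩ : ∃ δ : ℝ, 0 < δ ∧ ∀ (y : X) (t : ℝ≥0), (t : ℝ) < δ → φ t y ⤳ y := by
    refine ⟨Finset.univ.inf' Finset.univ_nonempty ε, ?_, fun y s hs => ?_⟩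
    · rw [Finset.lt_inf'_iff]
      exact fun y _ => hε y
    · exact hspec y s (lt_of_lt_of_le hs (Finset.inf'_le ε (Finset.mem_univ y)))
  obtain ⟨n, hn⟩ := exists_nat_gt ((t : ℝ) / δ)
  have hn0 : 0 < n := by
    have h0 : (0 : ℝ) ≤ (t : ℝ) / δ := div_nonneg t.coe_nonneg hδ.le
    exact_mod_cast lt_of_le_of_lt h0 hn
  have hnR : (0 : ℝ) < (n : ℝ) := by exact_mod_cast hn0
  have hteq : φ t x = (φ (t / n))^[n] x := by
    rw [← semiflow_iterate hφ]
    congr 1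
    rw [mul_div_cancel₀]
    exact_mod_cast hn0.ne'
  have hsmall : ((t / (n : ℝ≥0) : ℝ≥0) : ℝ) < δ := by
    have h1 : (t : ℝ) < n * δ := by
      rw [div_lt_iff₀ hδ] at hn
      linarith
    rw [NNReal.coe_div]
    push_cast
    rw [div_lt_iff₀ hnR]
    linarith
  rw [hteq]
  exact iter_specializes' (fun y => hδs y _ hsmall) n x

lemma semiflow_antitone (hφ : IsSemiflow φ) {s t : ℝ≥0} (hst : s ≤ t) (x : X) :
    φ t x ⤳ φ s x := by
  have h : φ s (φ (t - s) x) = φ t x := by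
    rw [hφ.2.2, add_tsub_cancel_of_le hst]
  rw [← h]
  exact (semiflow_deflate hφ (t - s) x).map (semiflow_cont_t hφ s)

/-- Every semiflow on a finite T₀ space is constant on positive times. -/
lemma semiflow_const (hφ : IsSemiflow φ) {t : ℝ≥0} (ht : 0 < t) : φ t = φ 1 := by
  classical
  haveI : Fintype X := Fintype.ofFinite X
  set h : (X → X) → ℕ := fun f => ∑ x : X, {y : X | y ⤳ f x}.ncard with hh
  have hmono : ∀ f g : X → X, (∀ x, f x ⤳ g x) → f ≠ g → h f < h g := by
    intro f g hfg hne
    obtain ⟨x₀, hx₀⟩ : ∃ x, f x ≠ g x := by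
      by_contra hcon
      push_neg at hcon
      exact hne (funext hcon)
    apply Finset.sum_lt_sum (f := fun x => {y : X | y ⤳ f x}.ncard)
    · intro i _
      exact Set.ncard_le_ncard (fun y hy => hy.trans (hfg i)) (Set.toFinite _)
    · refine ⟨x₀, Finset.mem_univ x₀, ?_⟩
      apply Set.ncard_lt_ncard _ (Set.toFinite _)
      constructor
      · exact fun y hy => hy.trans (hfg x₀)
      · intro hsub
        have hgf : g x₀ ⤳ f x₀ := hsub (specializes_refl (g x₀))
        exact hx₀ ((hfg x₀).antisymm hgf).eq
  set V : Finset (X → X) := (Set.toFinite (φ '' Set.Ioc (0 : ℝ≥0) 1)).toFinset with hV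
  have h1V : φ 1 ∈ V := by
    rw [hV, Set.Finite.mem_toFinset]
    exact ⟨1, ⟨zero_lt_one, le_refl 1⟩, rfl⟩
  obtain ⟨g₀, hg₀V, hg₀max⟩ := V.exists_max_image h ⟨φ 1, h1V⟩
  rw [hV, Set.Finite.mem_toFinset] at hg₀V
  obtain ⟨s, ⟨hs0, hs1⟩, rfl⟩ := hg₀V
  -- φ is constant equal to φ s on (0, s]
  have hconst : ∀ u : ℝ≥0, 0 < u → u ≤ s → φ u = φ s := by
    intro u hu0 hus
    have huV : φ u ∈ V := by
      rw [hV, Set.Finite.mem_toFinset]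
      exact ⟨u, ⟨hu0, hus.trans hs1⟩, rfl⟩
    have h1 : h (φ u) ≤ h (φ s) := hg₀max (φ u) huV
    by_contra hne2
    have h2 : h (φ s) < h (φ u) :=
      hmono (φ s) (φ u) (fun x => semiflow_antitone hφ hus x) (fun he => hne2 he.symm)
    omega
  -- φ s is idempotent
  have hidem : ∀ x, φ s (φ s x) = φ s x := by
    intro x
    have hs2 : (0 : ℝ≥0) < s / 2 := by positivity
    have e1 : φ (s / 2) = φ s := hconst (s / 2) hs2 (half_le_self (zero_le : (0 : ℝ≥0) ≤ s))
    calc φ s (φ s x) = φ (s/2) (φ (s/2) x) := by rw [e1]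
    _ = φ (s/2 + s/2) x := hφ.2.2 _ _ _
    _ = φ s x := by rw [add_halves]
  have hiter : ∀ (n : ℕ) (x : X), (φ s)^[n + 1] x = φ s x := by
    intro n x
    induction n with
    | zero => rfl
    | succ m ih =>
      rw [Function.iterate_succ_apply', ih, hidem]
  -- φ u = φ s for every positive u
  have hall : ∀ u : ℝ≥0, 0 < u → φ u = φ s := by
    intro u hu0
    obtain ⟨n, hn⟩ := exists_nat_ge (u / s)
    have hn0 : 0 < n := by
      have hpos : (0 : ℝ≥0) < u / s := by positivity
      have := lt_of_lt_of_le hpos hn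
      exact_mod_cast this
    have hnn : ((n : ℝ≥0)) ≠ 0 := by exact_mod_cast hn0.ne'
    have hnpos : (0 : ℝ≥0) < (n : ℝ≥0) := pos_iff_ne_zero.mpr hnn
    have hns : u ≤ (n : ℝ≥0) * s := (div_le_iff₀ hs0).mp hn
    have hun : u / (n : ℝ≥0) ≤ s := by
      rw [div_le_iff₀ hnpos, mul_comm]
      exact hns
    have hupos : (0 : ℝ≥0) < u / (n : ℝ≥0) := by positivity
    funext x
    have he : φ u x = (φ (u / n))^[n] x := by
      rw [← semiflow_iterate hφ, mul_div_cancel₀ _ hnn]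
    rw [he, hconst (u / n) hupos hun]
    obtain ⟨m, rfl⟩ : ∃ m, n = m + 1 := ⟨n - 1, by omega⟩
    exact hiter m x
  rw [hall t ht, hall 1 zero_lt_one]

/-- There are finitely many semiflows on a finite T₀ space. -/
lemma semiflow_finite : Finite {φ : ℝ≥0 → X → X // IsSemiflow φ} := by
  apply Finite.of_injective (fun φ => φ.1 1)
  rintro ⟨φ, hφ⟩ ⟨ψ, hψ⟩ h
  simp only at h
  ext t x
  show φ t x = ψ t x
  rcases eq_or_lt_of_le (zero_le : (0 : ℝ≥0) ≤ t) with rfl | ht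
  · rw [hφ.2.1, hψ.2.1]
  · rw [semiflow_const hφ ht, semiflow_const hψ ht, h]

end SemiflowFinite

/-! ### Construction of semiflows from sets of down beat points -/

section SFConstruct
variable {X : Type*} [TopologicalSpace X]

open Classical in
/-- One collapse step for a set `S` of points: down beat points in `S` are sent
to the greatest element of `U_x \ {x}`, other points are fixed. -/
noncomputable def sfStep (S : Set X) (x : X) : X :=
  if h : x ∈ S ∧ IsDownBeatPoint x then h.2.choose else x

lemma sfStep_specializes (S : Set X) (x : X) : sfStep S x ⤳ x := by
  unfold sfStep
  split
  · next h => exact h.2.choose_spec.1.1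
  · exact specializes_refl x

lemma sfStep_ne (S : Set X) {x : X} (hx : x ∈ S) (hd : IsDownBeatPoint x) :
    sfStep S x ≠ x := by
  unfold sfStep
  rw [dif_pos ⟨hx, hd⟩]
  exact hd.choose_spec.1.2

lemma sfStep_eq (S : Set X) {x : X} (hx : ¬ (x ∈ S ∧ IsDownBeatPoint x)) :
    sfStep S x = x := by
  unfold sfStep; rw [dif_neg hx]

lemma sfStep_mono (S : Set X) {x y : X} (h : y ⤳ x) : sfStep S y ⤳ sfStep S x := by
  by_cases hx : x ∈ S ∧ IsDownBeatPoint x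
  · rcases eq_or_ne y x with rfl | hne
    · exact specializes_refl _
    · have h1 : y ⤳ hx.2.choose := hx.2.choose_spec.2 y h hne
      have hx' : sfStep S x = hx.2.choose := dif_pos hx
      rw [hx']
      exact (sfStep_specializes S y).trans h1
  · rw [sfStep_eq S hx]
    exact (sfStep_specializes S y).trans h

/-- The idempotent retraction obtained by iterating `sfStep S`. -/
noncomputable def sfRet (S : Set X) : X → X := (sfStep S)^[Nat.card X]

lemma sfRet_specializes (S : Set X) (x : X) : sfRet S x ⤳ x :=
  iter_specializes' (sfStep_specializes S) _ x

lemma sfRet_mono (S : Set X) {x y : X} (h : y ⤳ x) : sfRet S y ⤳ sfRet S x := by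
  unfold sfRet
  generalize Nat.card X = n
  induction n with
  | zero => exact h
  | succ n ih =>
    rw [Function.iterate_succ_apply', Function.iterate_succ_apply']
    exact sfStep_mono S ih

lemma sfRet_idem [Finite X] [T0Space X] (S : Set X) (x : X) :
    sfRet S (sfRet S x) = sfRet S x := by
  unfold sfRet
  exact Function.iterate_fixed (iter_stab (sfStep_specializes S) x) _

lemma sfRet_eq (S : Set X) {x : X} (hx : ¬ (x ∈ S ∧ IsDownBeatPoint x)) :
    sfRet S x = x :=
  Function.iterate_fixed (sfStep_eq S hx) _

lemma sfRet_ne [Finite X] [T0Space X] (S : Set X) {x : X} (hx : x ∈ S)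
    (hd : IsDownBeatPoint x) : sfRet S x ≠ x := by
  haveI : Nonempty X := ⟨x⟩
  have hpos : 0 < Nat.card X := Nat.card_pos
  intro h
  obtain ⟨m, hm⟩ : ∃ m, Nat.card X = m + 1 := ⟨Nat.card X - 1, by omega⟩
  have h1 : sfRet S x ⤳ sfStep S x := by
    unfold sfRet
    rw [hm, Function.iterate_succ_apply]
    exact iter_specializes' (sfStep_specializes S) _ _
  rw [h] at h1
  exact sfStep_ne S hx hd (((sfStep_specializes S x).antisymm h1).eq)

lemma sfRet_continuous [Finite X] (S : Set X) : Continuous (sfRet S) := by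
  rw [continuous_def]
  intro U hU
  rw [isOpen_iff_forall_specializes] at hU ⊢
  intro x y hxy hy
  exact hU _ _ (sfRet_mono S hxy) hy

/-- The semiflow associated to `S`. -/
noncomputable def sfFlow (S : Set X) : ℝ≥0 → X → X :=
  fun t x => if t = 0 then x else sfRet S x

lemma sfFlow_isSemiflow [Finite X] [T0Space X] (S : Set X) : IsSemiflow (sfFlow S) := by
  refine ⟨?_, fun x => if_pos rfl, ?_⟩
  · rw [continuous_def]
    intro U hU
    have hsub : U ⊆ sfRet S ⁻¹' U := fun x hx =>
      (sfRet_specializes S x).mem_open hU hx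
    have heq : (fun p : ℝ≥0 × X => sfFlow S p.1 p.2) ⁻¹' U =
        (Set.univ ×ˢ U) ∪ ({t : ℝ≥0 | t ≠ 0} ×ˢ (sfRet S ⁻¹' U)) := by
      ext ⟨t, x⟩
      simp only [Set.mem_preimage, sfFlow, Set.mem_union, Set.mem_prod, Set.mem_univ,
        true_and, Set.mem_setOf_eq]
      by_cases ht : t = 0
      · simp [ht]
      · rw [if_neg ht]
        constructor
        · intro hr
          exact Or.inr ⟨ht, hr⟩
        · rintro (hx | ⟨-, hr⟩)
          · exact hsub hx
          · exact hr
    rw [heq]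
    exact (isOpen_univ.prod hU).union (isOpen_ne.prod (hU.preimage (sfRet_continuous S)))
  · intro s t x
    by_cases hs : s = 0 <;> by_cases ht : t = 0 <;>
      simp [sfFlow, hs, ht, add_eq_zero, sfRet_idem]

end SFConstruct

/-- The number of semiflows on a finite `T₀`-space is at least
`2 ^ |D(X)|`, where `D(X)` is the set of down beat points. -/
theorem card_semiflows_ge_pow_downBeatPoints {X : Type*} [TopologicalSpace X] [Finite X]
    [T0Space X] :
    2 ^ Set.ncard {x : X | IsDownBeatPoint x} ≤
      Nat.card {φ : ℝ≥0 → X → X // IsSemiflow φ} := by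
  classical
  haveI : Finite {φ : ℝ≥0 → X → X // IsSemiflow φ} := semiflow_finite
  set D : Set X := {x : X | IsDownBeatPoint x} with hD
  let F : Set ↥D → {φ : ℝ≥0 → X → X // IsSemiflow φ} :=
    fun S => ⟨sfFlow (Subtype.val '' S), sfFlow_isSemiflow _⟩
  have hchar : ∀ (S : Set ↥D) (d : ↥D),
      d ∈ S ↔ (F S).1 1 d.1 ≠ d.1 := by
    intro S d
    have h1 : (F S).1 1 d.1 = sfRet (Subtype.val '' S) d.1 := if_neg one_ne_zero
    rw [h1]
    constructor
    · intro hd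
      exact sfRet_ne _ ⟨d, hd, rfl⟩ d.2
    · intro hne
      by_contra hd
      apply hne
      apply sfRet_eq
      rintro ⟨⟨d', hd', hval⟩, -⟩
      exact hd (by rwa [Subtype.val_injective hval] at hd')
  have hinj : Function.Injective F := by
    intro S₁ S₂ h
    ext d
    rw [hchar S₁ d, hchar S₂ d, h]
  have hcard := Nat.card_le_card_of_injective F hinj
  have hfin : Nat.card (Set ↥D) = 2 ^ D.ncard := by
    haveI : Fintype ↥D := Fintype.ofFinite _
    rw [Nat.card_eq_fintype_card, Fintype.card_set, ← Nat.card_eq_fintype_card,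
      Nat.card_coe_set_eq]
  rw [show Set.ncard {x : X | IsDownBeatPoint x} = D.ncard from rfl, ← hfin]
  exact hcard
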